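/- Let (X, 𝒰) be a Hausdorff uniform space without isolated points and (X, f_{1,∞}) a minimal periodic non-autonomous system whose induced autonomous system (X, g) has a transitive point. Then (X, f_{1,∞}) is either sensitive or equicontinuous. -/

import Mathlib

open Topology Filter Set
open scoped Uniformity

/-- `traj f n = f_n ∘ ⋯ ∘ f_1` (and `traj f 0 = id`), i.e. `f_1^n`. -/
def traj {X : Type*} (f : ℕ → X → X) : ℕ → X → X
  | 0 => id
  | n + 1 => f (n + 1) ∘ traj f n

/-- The family `f` is periodic with period `p`. -/
def PeriodicFam {X : Type*} (f : ℕ → X → X) (p : ℕ) : Prop :=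
  ∀ n, f (n + p) = f n

/-- A set of naturals is thick: it contains arbitrarily long blocks of consecutive integers. -/
def Thick (T : Set ℕ) : Prop :=
  ∀ k : ℕ, ∃ n : ℕ, ∀ i ≤ k, n + i ∈ T

/-- A set of naturals is syndetic: it has bounded gaps. -/
def Syndetic (S : Set ℕ) : Prop :=
  ∃ M : ℕ, ∀ n : ℕ, ∃ m ∈ S, n ≤ m ∧ m ≤ n + M

/-- `x` is a transitive point of the non-autonomous system `(X, f_{1,∞})`. -/
def TransPt {X : Type*} [TopologicalSpace X] (f : ℕ → X → X) (x : X) : Prop :=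
  Dense (Set.range fun n => traj f n x)

/-- `x` is a transitive point of the autonomous system `(X, g)`. -/
def TransPtAut {X : Type*} [TopologicalSpace X] (g : X → X) (x : X) : Prop :=
  Dense (Set.range fun n => g^[n] x)

/-- `x` is an equicontinuity point of `(X, f_{1,∞})` on a uniform space. -/
def EqPt {X : Type*} [UniformSpace X] (f : ℕ → X → X) (x : X) : Prop :=
  ∀ E ∈ 𝓤 X, ∃ D ∈ 𝓤 X, ∀ y : X, (x, y) ∈ D → ∀ n : ℕ, (traj f n x, traj f n y) ∈ E

/-- `x` is a syndetically equicontinuous point of `(X, f_{1,∞})`. -/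
def SynEqPt {X : Type*} [UniformSpace X] (f : ℕ → X → X) (x : X) : Prop :=
  ∀ E ∈ 𝓤 X, ∃ U ∈ 𝓝 x,
    Syndetic {n : ℕ | ∀ x₁ ∈ U, ∀ x₂ ∈ U, (traj f n x₁, traj f n x₂) ∈ E}

/-- `x` is a syndetically equicontinuous point of the autonomous system `(X, g)`. -/
def SynEqPtAut {X : Type*} [UniformSpace X] (g : X → X) (x : X) : Prop :=
  ∀ E ∈ 𝓤 X, ∃ U ∈ 𝓝 x,
    Syndetic {n : ℕ | ∀ x₁ ∈ U, ∀ x₂ ∈ U, (g^[n] x₁, g^[n] x₂) ∈ E}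

/-- `N(U, D)` for the non-autonomous system. -/
def NSet {X : Type*} (f : ℕ → X → X) (U : Set X) (D : Set (X × X)) : Set ℕ :=
  {n : ℕ | 0 < n ∧ ∃ x ∈ U, ∃ y ∈ U, (traj f n x, traj f n y) ∉ D}

/-- `N(U, D)` for the autonomous system. -/
def NSetAut {X : Type*} (g : X → X) (U : Set X) (D : Set (X × X)) : Set ℕ :=
  {n : ℕ | 0 < n ∧ ∃ x ∈ U, ∃ y ∈ U, (g^[n] x, g^[n] y) ∉ D}

/-- Sensitivity of `(X, f_{1,∞})`. -/
def Sensitive {X : Type*} [UniformSpace X] (f : ℕ → X → X) : Prop :=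
  ∃ D ∈ 𝓤 X, ∀ U : Set X, IsOpen U → U.Nonempty → (NSet f U D).Nonempty

/-- Thick sensitivity of `(X, f_{1,∞})`. -/
def ThickSensitive {X : Type*} [UniformSpace X] (f : ℕ → X → X) : Prop :=
  ∃ D ∈ 𝓤 X, ∀ U : Set X, IsOpen U → U.Nonempty → Thick (NSet f U D)

/-- Thick sensitivity of the autonomous system `(X, g)`. -/
def ThickSensitiveAut {X : Type*} [UniformSpace X] (g : X → X) : Prop :=
  ∃ D ∈ 𝓤 X, ∀ U : Set X, IsOpen U → U.Nonempty → Thick (NSetAut g U D)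

/-- Multi-sensitivity of `(X, f_{1,∞})`. -/
def MultiSensitive {X : Type*} [UniformSpace X] (f : ℕ → X → X) : Prop :=
  ∃ D ∈ 𝓤 X, ∀ (k : ℕ) (U : Fin (k + 1) → Set X),
    (∀ i, IsOpen (U i)) → (∀ i, (U i).Nonempty) → (⋂ i, NSet f (U i) D).Nonempty

/-- Multi-sensitivity of the autonomous system `(X, g)`. -/
def MultiSensitiveAut {X : Type*} [UniformSpace X] (g : X → X) : Prop :=
  ∃ D ∈ 𝓤 X, ∀ (k : ℕ) (U : Fin (k + 1) → Set X),
    (∀ i, IsOpen (U i)) → (∀ i, (U i).Nonempty) → (⋂ i, NSetAut g (U i) D).Nonempty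

/-- Eventual sensitivity of `(X, f_{1,∞})` with a given entourage `D`. -/
def EvSensitiveWith {X : Type*} [UniformSpace X] (f : ℕ → X → X) (D : Set (X × X)) : Prop :=
  ∀ x : X, ∀ E ∈ 𝓤 X, ∃ n k : ℕ, 0 < n ∧ 0 < k ∧
    ∃ y : X, (traj f n x, y) ∈ E ∧ (traj f (n + k) x, traj f k y) ∉ D

/-- Eventual sensitivity of `(X, f_{1,∞})`. -/
def EvSensitive {X : Type*} [UniformSpace X] (f : ℕ → X → X) : Prop :=
  ∃ D ∈ 𝓤 X, EvSensitiveWith f D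

/-- Eventual sensitivity of the autonomous system `(X, g)` with entourage `D`. -/
def EvSensitiveAutWith {X : Type*} [UniformSpace X] (g : X → X) (D : Set (X × X)) : Prop :=
  ∀ x : X, ∀ E ∈ 𝓤 X, ∃ q k : ℕ, 0 < q ∧ 0 < k ∧
    ∃ y : X, (g^[q] x, y) ∈ E ∧ (g^[q + k] x, g^[k] y) ∉ D

/-- `(x, y)` is a (topological) equicontinuity pair for `(X, f_{1,∞})`. -/
def EqPair {X : Type*} [TopologicalSpace X] (f : ℕ → X → X) (x y : X) : Prop :=
  ∀ O ∈ 𝓝 y, ∃ U ∈ 𝓝 x, ∃ V ∈ 𝓝 y, ∀ n : ℕ, 0 < n →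
    ((traj f n '' U) ∩ V).Nonempty → traj f n '' U ⊆ O

/-- `(x, y)` is a syndetic equicontinuity pair for `(X, f_{1,∞})`. -/
def SynEqPair {X : Type*} [TopologicalSpace X] (f : ℕ → X → X) (x y : X) : Prop :=
  ∀ O ∈ 𝓝 y, ∃ U ∈ 𝓝 x, ∃ V ∈ 𝓝 y,
    Syndetic {n : ℕ | ((traj f n '' U) ∩ V).Nonempty → traj f n '' U ⊆ O}

/-- `O` is a splitting neighborhood of `y` with respect to `x`. -/
def SplittingNbhd {X : Type*} [TopologicalSpace X] (f : ℕ → X → X) (x y : X) (O : Set X) :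
    Prop :=
  O ∈ 𝓝 y ∧ ∀ U ∈ 𝓝 x, ∀ V ∈ 𝓝 y, ∃ n : ℕ, 0 < n ∧
    ((traj f n '' U) ∩ V).Nonempty ∧ ¬ traj f n '' U ⊆ O

/-- A finite open cover of `X`. -/
def IsFinOpenCover {X : Type*} [TopologicalSpace X] (𝒰 : Finset (Set X)) : Prop :=
  (∀ U ∈ 𝒰, IsOpen U) ∧ ⋃₀ (↑𝒰 : Set (Set X)) = Set.univ

/-- `N(V, 𝒰)`: times at which `f_1^n(V)` is not contained in any single member of `𝒰`. -/
def HNSet {X : Type*} (f : ℕ → X → X) (V : Set X) (𝒰 : Finset (Set X)) : Set ℕ :=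
  {n : ℕ | 0 < n ∧ ∀ U ∈ 𝒰, ¬ traj f n '' V ⊆ U}

/-- `N(V, 𝒰)` for the autonomous system. -/
def HNSetAut {X : Type*} (g : X → X) (V : Set X) (𝒰 : Finset (Set X)) : Set ℕ :=
  {n : ℕ | 0 < n ∧ ∀ U ∈ 𝒰, ¬ g^[n] '' V ⊆ U}

/-- Hausdorff sensitivity of `(X, f_{1,∞})`. -/
def HSensitive {X : Type*} [TopologicalSpace X] (f : ℕ → X → X) : Prop :=
  ∃ 𝒰 : Finset (Set X), IsFinOpenCover 𝒰 ∧
    ∀ V : Set X, IsOpen V → V.Nonempty → (HNSet f V 𝒰).Nonempty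

/-- Hausdorff sensitivity of the autonomous system `(X, g)`. -/
def HSensitiveAut {X : Type*} [TopologicalSpace X] (g : X → X) : Prop :=
  ∃ 𝒰 : Finset (Set X), IsFinOpenCover 𝒰 ∧
    ∀ V : Set X, IsOpen V → V.Nonempty → (HNSetAut g V 𝒰).Nonempty

/-- Thick Hausdorff sensitivity of `(X, f_{1,∞})`. -/
def ThickHSensitive {X : Type*} [TopologicalSpace X] (f : ℕ → X → X) : Prop :=
  ∃ 𝒰 : Finset (Set X), IsFinOpenCover 𝒰 ∧
    ∀ V : Set X, IsOpen V → V.Nonempty → Thick (HNSet f V 𝒰)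

/-- Thick Hausdorff sensitivity of the autonomous system `(X, g)`. -/
def ThickHSensitiveAut {X : Type*} [TopologicalSpace X] (g : X → X) : Prop :=
  ∃ 𝒰 : Finset (Set X), IsFinOpenCover 𝒰 ∧
    ∀ V : Set X, IsOpen V → V.Nonempty → Thick (HNSetAut g V 𝒰)

/-- Multi-Hausdorff sensitivity of the autonomous system `(X, g)`. -/
def MultiHSensitiveAut {X : Type*} [TopologicalSpace X] (g : X → X) : Prop :=
  ∃ 𝒰 : Finset (Set X), IsFinOpenCover 𝒰 ∧
    ∀ (m : ℕ) (V : Fin (m + 1) → Set X),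
      (∀ i, IsOpen (V i)) → (∀ i, (V i).Nonempty) → (⋂ i, HNSetAut g (V i) 𝒰).Nonempty

section AuxAY

lemma traj_continuous' {X : Type*} [TopologicalSpace X] (f : ℕ → X → X)
    (hf : ∀ n, Continuous (f n)) : ∀ n, Continuous (traj f n)
  | 0 => continuous_id
  | n + 1 => (hf (n + 1)).comp (traj_continuous' f hf n)

lemma traj_shift_comp {X : Type*} (f : ℕ → X → X) (r : ℕ) :
    ∀ n z, traj (fun k => f (k + r)) n (traj f r z) = traj f (n + r) z
  | 0, z => by rw [Nat.zero_add]; rfl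
  | n + 1, z => by
    have h : n + 1 + r = (n + r) + 1 := by omega
    calc traj (fun k => f (k + r)) (n + 1) (traj f r z)
        = f (n + 1 + r) (traj (fun k => f (k + r)) n (traj f r z)) := rfl
      _ = f (n + 1 + r) (traj f (n + r) z) := by rw [traj_shift_comp f r n z]
      _ = traj f (n + 1 + r) z := by rw [h]; rfl

lemma traj_p_add {X : Type*} (f : ℕ → X → X) (p : ℕ) (hper : PeriodicFam f p) :
    ∀ s, traj f (p + s) = traj f s ∘ traj f p
  | 0 => rfl
  | s + 1 => by
    have h : p + (s + 1) = (p + s) + 1 := by omega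
    have h2 : p + s + 1 = s + 1 + p := by omega
    funext z
    calc traj f (p + (s + 1)) z = f (p + s + 1) (traj f (p + s) z) := by rw [h]; rfl
      _ = f (s + 1) (traj f s (traj f p z)) := by
          rw [traj_p_add f p hper s, h2, hper (s + 1)]; rfl
      _ = traj f (s + 1) (traj f p z) := rfl

lemma traj_mul_add {X : Type*} (f : ℕ → X → X) (p : ℕ) (hper : PeriodicFam f p) :
    ∀ K s, traj f (K * p + s) = traj f s ∘ (traj f p)^[K]
  | 0, s => by simp
  | K + 1, s => by
    have h : (K + 1) * p + s = K * p + (p + s) := by ring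
    rw [h, traj_mul_add f p hper K (p + s), traj_p_add f p hper s,
      Function.iterate_succ']
    rfl

lemma exists_interior_nonempty {X : Type*} [TopologicalSpace X] :
    ∀ (p : ℕ) (K : ℕ → Set X) (G : Set X), (∀ r, IsClosed (K r)) → IsOpen G →
      G.Nonempty → (G ⊆ ⋃ r ∈ Finset.range p, K r) →
      ∃ r < p, (interior (K r)).Nonempty := by
  intro p
  induction p with
  | zero =>
    rintro K G _ _ ⟨a, ha⟩ hsub
    simpa using hsub ha
  | succ p ih =>
    intro K G hK hG hne hsub
    rcases (G \ K p).eq_empty_or_nonempty with h | h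
    · refine ⟨p, Nat.lt_succ_self p, ?_⟩
      have hGK : G ⊆ K p := by
        intro a ha
        by_contra hc
        exact absurd (Set.mem_diff a |>.mpr ⟨ha, hc⟩) (h ▸ Set.notMem_empty a)
      obtain ⟨a, ha⟩ := hne
      exact ⟨a, (IsOpen.subset_interior_iff hG).mpr hGK ha⟩
    · have hsub' : G \ K p ⊆ ⋃ r ∈ Finset.range p, K r := by
        rintro b ⟨hbG, hbK⟩
        rcases Set.mem_iUnion₂.mp (hsub hbG) with ⟨r, hr, hbr⟩
        have hr' : r < p + 1 := Finset.mem_range.mp hr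
        have hrp : r ≠ p := by rintro rfl; exact hbK hbr
        exact Set.mem_iUnion₂.mpr ⟨r, Finset.mem_range.mpr (by omega), hbr⟩
      obtain ⟨r, hr, hint⟩ := ih K (G \ K p) hK (hG.sdiff (hK p)) h hsub'
      exact ⟨r, by omega, hint⟩

lemma g_orbit_dense {X : Type*} [TopologicalSpace X] [T1Space X]
    (hiso : ∀ x : X, (𝓝[≠] x).NeBot)
    (f : ℕ → X → X) (hf : ∀ n, Continuous (f n))
    (p : ℕ) (hp : 0 < p) (hper : PeriodicFam f p)
    (htrans : ∃ x₀, TransPtAut (traj f p) x₀)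
    (hmin : ∀ x : X, TransPt f x) (x : X) :
    Dense (Set.range fun k => (traj f p)^[k] x) := by
  obtain ⟨x₀, hx₀⟩ := htrans
  set g : X → X := traj f p with hg
  have key : ∀ (z : X) (a b : ℕ), g^[a] (g^[b] z) = g^[a + b] z :=
    fun z a b => (Function.iterate_add_apply g a b z).symm
  -- all tail points of the g-orbit of x₀ are g-transitive
  have htail : ∀ j : ℕ, Dense (Set.range fun n => g^[n] (g^[j] x₀)) := by
    intro j
    induction j with
    | zero => exact hx₀
    | succ j ih =>
      haveI := hiso (g^[j] x₀)
      have h2 := ih.diff_singleton (g^[j] x₀)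
      refine h2.mono ?_
      rintro y ⟨⟨n, rfl⟩, hne⟩
      cases n with
      | zero => exact absurd rfl hne
      | succ m =>
        refine ⟨m, ?_⟩
        show g^[m] (g^[j + 1] x₀) = g^[m + 1] (g^[j] x₀)
        rw [key, key]
        congr 1
        omega
  -- covering by closures of residue classes
  set Kc : ℕ → Set X := fun r => closure (traj f r '' (Set.range fun k => g^[k] x))
    with hKc
  have hcover : (Set.univ : Set X) ⊆ ⋃ r ∈ Finset.range p, Kc r := by
    have horb := hmin x
    have hclosed : IsClosed (⋃ r ∈ Finset.range p, Kc r) :=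
      isClosed_biUnion_finset fun i _ => isClosed_closure
    have hsub : (Set.range fun n => traj f n x) ⊆ ⋃ r ∈ Finset.range p, Kc r := by
      rintro _ ⟨n, rfl⟩
      have hmod : n % p < p := Nat.mod_lt _ hp
      have hdm : (n / p) * p + n % p = n := by
        rw [mul_comm]; exact Nat.div_add_mod n p
      refine Set.mem_biUnion (Finset.mem_range.mpr hmod) ?_
      apply subset_closure
      refine ⟨g^[n / p] x, ⟨n / p, rfl⟩, ?_⟩
      have := traj_mul_add f p hper (n / p) (n % p)
      calc traj f (n % p) (g^[n / p] x)
          = (traj f (n % p) ∘ g^[n / p]) x := rfl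
        _ = traj f ((n / p) * p + n % p) x := by rw [this]
        _ = traj f n x := by rw [hdm]
    intro y _
    exact (IsClosed.closure_subset_iff hclosed).mpr hsub (horb y)
  obtain ⟨r, hrp, a, haG⟩ := exists_interior_nonempty p Kc Set.univ
    (fun r => isClosed_closure) isOpen_univ ⟨x, trivial⟩ hcover
  -- find a g-transitive point whose traj-f-r image is in Kc r
  have hGsub : interior (Kc r) ⊆ closure (Set.range (traj f r)) :=
    interior_subset.trans (closure_mono (Set.image_subset_range _ _))
  obtain ⟨b, hbG, z0, hz0⟩ := mem_closure_iff_nhds.mp (hGsub haG) (interior (Kc r))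
    (isOpen_interior.mem_nhds haG)
  have hpre_open : IsOpen ((traj f r) ⁻¹' interior (Kc r)) :=
    isOpen_interior.preimage (traj_continuous' f hf r)
  have hpre_ne : ((traj f r) ⁻¹' interior (Kc r)).Nonempty :=
    ⟨z0, by rw [Set.mem_preimage, hz0]; exact hbG⟩
  obtain ⟨_, ⟨j, rfl⟩, hjmem⟩ := hx₀.exists_mem_open hpre_open hpre_ne
  set σ := g^[j] x₀ with hσ
  have hσK : traj f r σ ∈ Kc r := interior_subset hjmem
  -- push forward along the orbit
  have hpush : ∀ n : ℕ, 0 < n → g^[n] σ ∈ closure (Set.range fun k => g^[k] x) := by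
    intro n hn
    set F : ℕ → X → X := fun k => f (k + r) with hF
    have hφc : Continuous (traj F (n * p - r)) := traj_continuous' F (fun k => hf _) _
    have hnr : n * p - r + r = n * p := by
      have h1 : p ≤ n * p := Nat.le_mul_of_pos_left p hn
      omega
    have hφ : ∀ z, traj F (n * p - r) (traj f r z) = g^[n] z := by
      intro z
      rw [traj_shift_comp f r (n * p - r) z, hnr]
      have h2 := traj_mul_add f p hper n 0
      rw [Nat.add_zero] at h2
      rw [h2]
      rfl
    have h1 : traj F (n * p - r) (traj f r σ) ∈
        closure (traj F (n * p - r) '' (traj f r '' (Set.range fun k => g^[k] x))) := by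
      apply image_closure_subset_closure_image hφc
      exact Set.mem_image_of_mem _ hσK
    have h2 : traj F (n * p - r) '' (traj f r '' (Set.range fun k => g^[k] x)) ⊆
        Set.range fun k => g^[k] x := by
      rintro _ ⟨_, ⟨_, ⟨k, rfl⟩, rfl⟩, rfl⟩
      refine ⟨n + k, ?_⟩
      show g^[n + k] x = traj F (n * p - r) (traj f r (g^[k] x))
      rw [hφ, key]
    have := closure_mono h2 h1
    rwa [hφ σ] at this
  -- conclude
  have hfinal : (Set.range fun k => g^[k] (g^[j + 1] x₀)) ⊆
      closure (Set.range fun k => g^[k] x) := by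
    rintro _ ⟨k, rfl⟩
    show g^[k] (g^[j + 1] x₀) ∈ closure (Set.range fun k => g^[k] x)
    have h3 : g^[k] (g^[j + 1] x₀) = g^[k + 1] (g^[j] x₀) := by
      rw [key, key]; congr 1; omega
    rw [h3]
    exact hpush (k + 1) (Nat.succ_pos k)
  exact ((htail (j + 1)).mono hfinal).of_closure

end AuxAY

/-- Auslander–Yorke dichotomy for minimal periodic non-autonomous systems. -/
theorem auslander_yorke_minimal {X : Type*} [UniformSpace X] [T2Space X]
    (hiso : ∀ x : X, (𝓝[≠] x).NeBot)
    (f : ℕ → X → X) (hf : ∀ n, Continuous (f n))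
    (p : ℕ) (hp : 0 < p) (hper : PeriodicFam f p)
    (htrans : ∃ x, TransPtAut (traj f p) x)
    (hmin : ∀ x : X, TransPt f x) :
    Sensitive f ∨ (∀ x : X, EqPt f x) := by
  by_cases hs : Sensitive f
  · exact Or.inl hs
  right
  intro x E hE
  rw [Sensitive] at hs
  push_neg at hs
  obtain ⟨U, hUo, hUne, hUst⟩ := hs E hE
  have hstable : ∀ s : ℕ, 0 < s → ∀ u ∈ U, ∀ v ∈ U, (traj f s u, traj f s v) ∈ E := by
    intro s hs' u hu v hv
    by_contra hcon
    have hmem : s ∈ NSet f U E := ⟨hs', u, hu, v, hv, hcon⟩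
    rw [hUst] at hmem
    exact Set.notMem_empty s hmem
  have hD := g_orbit_dense hiso f hf p hp hper htrans hmin x
  obtain ⟨_, ⟨K, rfl⟩, haU⟩ := hD.exists_mem_open hUo hUne
  set N := K * p with hN
  set W : Set X := (⋂ n ∈ Finset.range (N + 1),
      (traj f n) ⁻¹' (UniformSpace.ball (traj f n x) E)) ∩ ((traj f p)^[K] ⁻¹' U) with hW
  have hWmem : W ∈ 𝓝 x := by
    apply Filter.inter_mem
    · refine (Filter.biInter_finset_mem _).mpr ?_
      intro n _
      exact ((traj_continuous' f hf n).continuousAt).preimage_mem_nhds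
        (UniformSpace.ball_mem_nhds _ hE)
    · exact (((traj_continuous' f hf p).iterate K).continuousAt).preimage_mem_nhds
        (hUo.mem_nhds haU)
  obtain ⟨D', hD', hball⟩ := UniformSpace.mem_nhds_iff.mp hWmem
  refine ⟨D', hD', ?_⟩
  intro y hxy n
  have hyW : y ∈ W := hball hxy
  rcases le_or_gt n N with hn | hn
  · exact Set.mem_iInter₂.mp hyW.1 n (Finset.mem_range.mpr (by omega))
  · have hu : (traj f p)^[K] x ∈ U := haU
    have hv : (traj f p)^[K] y ∈ U := hyW.2
    have hrw := traj_mul_add f p hper K (n - N)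
    have hKn : K * p + (n - N) = n := by omega
    rw [hKn] at hrw
    rw [hrw]
    exact hstable (n - N) (by omega) _ hu _ hv
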